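/- There exist a countable collection X = {L_1, L_2, …} of languages and a language K ∈ X with the following property: for every index-based generation algorithm f that guarantees validity for X, there exists an enumeration E of K such that liminf_{t→∞} μ_up(L_{i_t}, K) = 0, where i_t = f(w_1, …, w_t). -/

import Mathlib

/-- The finite prefix `[E 0, …, E t]` of the adversary's enumeration. -/
def epref (E : ℕ → ℕ) (t : ℕ) : List ℕ := (List.range (t + 1)).map E

/-- `E` is an enumeration of the language `K`. -/
def IsEnum (E : ℕ → ℕ) (K : Set ℕ) : Prop := Function.Injective E ∧ Set.range E = K

/-- The upper density of `L` in the infinite set `K`. -/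
noncomputable def upperDensity (L K : Set ℕ) : ℝ :=
  Filter.limsup
    (fun N : ℕ => ((Set.ncard {n : ℕ | n < N ∧ Nat.nth (· ∈ K) n ∈ L}) : ℝ) / N)
    Filter.atTop

/-- The index-based generation algorithm `f` guarantees validity for the collection
`L`: on any enumeration of any member of the collection, its guesses are eventually
always subsets of the enumerated language. -/
def GuaranteesValidity (L : ℕ → Set ℕ) (f : List ℕ → ℕ) : Prop :=
  ∀ (i : ℕ) (E : ℕ → ℕ), IsEnum E (L i) →
    ∃ t0 : ℕ, ∀ t ≥ t0, L (f (epref E t)) ⊆ L i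

namespace Stmt4Aux

/-- The sparse "core" set: perfect squares. -/
def C : Set ℕ := Set.range (fun k => k * k)

lemma C_infinite : C.Infinite :=
  Set.infinite_range_of_injective (fun a b h => Nat.mul_self_inj.mp h)

/-- The collection: `L 0 = ℕ`, and `L (i+1) = C ∪ F` for the `i`-th finite set `F`. -/
noncomputable def L : ℕ → Set ℕ
  | 0 => Set.univ
  | (i+1) => C ∪ ↑(Denumerable.ofNat (Finset ℕ) i)

lemma L_infinite (i : ℕ) : (L i).Infinite := by
  cases i with
  | zero => exact Set.infinite_univ
  | succ i => exact (C_infinite.mono Set.subset_union_left)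

lemma nth_univ (n : ℕ) : Nat.nth (· ∈ (Set.univ : Set ℕ)) n = n := by
  classical
  have h : Nat.count (· ∈ (Set.univ : Set ℕ)) n = n := by
    simp [Nat.count_eq_card_filter_range]
  conv_lhs => rw [← h]
  exact Nat.nth_count (Set.mem_univ n)

/-- count of squares below N is at most sqrt N + 1. -/
lemma sq_count_le (N : ℕ) : {n : ℕ | n < N ∧ n ∈ C}.ncard ≤ Nat.sqrt N + 1 := by
  have hsub : {n : ℕ | n < N ∧ n ∈ C} ⊆ (fun k => k * k) '' (Set.Iic (Nat.sqrt N)) := by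
    rintro n ⟨hn, k, rfl⟩
    exact ⟨k, Nat.le_sqrt.2 (le_of_lt hn), rfl⟩
  have hfin : ((fun k => k * k) '' (Set.Iic (Nat.sqrt N))).Finite :=
    (Set.finite_Iic _).image _
  calc {n : ℕ | n < N ∧ n ∈ C}.ncard ≤ ((fun k => k * k) '' (Set.Iic (Nat.sqrt N))).ncard :=
        Set.ncard_le_ncard hsub hfin
    _ ≤ (Set.Iic (Nat.sqrt N)).ncard := Set.ncard_image_le (Set.finite_Iic _)
    _ = Nat.sqrt N + 1 := by
        rw [← Finset.coe_Iic, Set.ncard_coe_finset, Nat.card_Iic]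

lemma tendsto_sqrt_atTop : Filter.Tendsto (fun n : ℕ => Nat.sqrt n) Filter.atTop Filter.atTop := by
  refine Filter.tendsto_atTop.2 fun b => Filter.eventually_atTop.2 ⟨b * b, fun n hn => ?_⟩
  exact Nat.le_sqrt.2 hn

lemma tendsto_sqrt_div : Filter.Tendsto (fun N : ℕ => (Nat.sqrt N : ℝ) / N)
    Filter.atTop (nhds 0) := by
  have h1 : Filter.Tendsto (fun N : ℕ => ((Nat.sqrt N : ℝ))⁻¹) Filter.atTop (nhds 0) := by
    have : Filter.Tendsto (fun N : ℕ => (Nat.sqrt N : ℝ)) Filter.atTop Filter.atTop :=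
      tendsto_natCast_atTop_atTop.comp tendsto_sqrt_atTop
    exact Filter.Tendsto.comp tendsto_inv_atTop_zero this
  refine tendsto_of_tendsto_of_tendsto_of_le_of_le' tendsto_const_nhds h1 ?_ ?_
  · filter_upwards with N
    positivity
  · filter_upwards [Filter.eventually_ge_atTop 1] with N hN
    have hs : 1 ≤ Nat.sqrt N := Nat.le_sqrt.2 (by simpa using hN)
    have hss : (Nat.sqrt N : ℝ) * (Nat.sqrt N : ℝ) ≤ N := by exact_mod_cast Nat.sqrt_le N
    have hpos : (0:ℝ) < Nat.sqrt N := by exact_mod_cast hs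
    calc (Nat.sqrt N : ℝ) / N ≤ (Nat.sqrt N : ℝ) / ((Nat.sqrt N : ℝ) * Nat.sqrt N) :=
          div_le_div_of_nonneg_left (by positivity) (by positivity) hss
      _ = ((Nat.sqrt N : ℝ))⁻¹ := by field_simp

lemma term_bounds (M K : Set ℕ) (N : ℕ) :
    (0:ℝ) ≤ ((Set.ncard {n : ℕ | n < N ∧ Nat.nth (· ∈ K) n ∈ M}) : ℝ) / N ∧
    ((Set.ncard {n : ℕ | n < N ∧ Nat.nth (· ∈ K) n ∈ M}) : ℝ) / N ≤ 1 := by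
  constructor
  · positivity
  · rcases Nat.eq_zero_or_pos N with h | h
    · simp [h]
    · rw [div_le_one (by exact_mod_cast h)]
      have hsub : {n : ℕ | n < N ∧ Nat.nth (· ∈ K) n ∈ M} ⊆ Set.Iio N := fun n hn => hn.1
      have hle := Set.ncard_le_ncard hsub (Set.finite_Iio N)
      have hIio : (Set.Iio N).ncard = N := by
        rw [← Finset.coe_Iio, Set.ncard_coe_finset, Nat.card_Iio]
      exact_mod_cast hIio ▸ hle

lemma upperDensity_nonneg (M K : Set ℕ) : 0 ≤ upperDensity M K := by
  unfold upperDensity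
  exact Filter.le_limsup_of_frequently_le
    (Filter.Eventually.frequently (Filter.Eventually.of_forall fun N => (term_bounds M K N).1))
    (Filter.isBoundedUnder_of ⟨1, fun N => (term_bounds M K N).2⟩)

lemma upperDensity_le_one (M K : Set ℕ) : upperDensity M K ≤ 1 := by
  unfold upperDensity
  refine Filter.limsup_le_of_le ?_ (Filter.Eventually.of_forall fun N => (term_bounds M K N).2)
  refine Filter.IsBoundedUnder.isCoboundedUnder_le ?_
  refine Filter.isBoundedUnder_of ⟨0, fun N => ?_⟩
  exact (term_bounds M K N).1

/-- Any subset of `C ∪ (a finite set)` has upper density 0 in `ℕ`. -/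
lemma density_zero {M T : Set ℕ} (hT : T.Finite) (hM : M ⊆ C ∪ T) :
    upperDensity M Set.univ = 0 := by
  have key : Filter.Tendsto
      (fun N : ℕ => ((Set.ncard {n : ℕ | n < N ∧ Nat.nth (· ∈ (Set.univ : Set ℕ)) n ∈ M}) : ℝ) / N)
      Filter.atTop (nhds 0) := by
    have hbound : ∀ N : ℕ, ({n : ℕ | n < N ∧ Nat.nth (· ∈ (Set.univ : Set ℕ)) n ∈ M}).ncard
        ≤ Nat.sqrt N + 1 + T.ncard := by
      intro N
      have he : {n : ℕ | n < N ∧ Nat.nth (· ∈ (Set.univ : Set ℕ)) n ∈ M}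
          ⊆ {n : ℕ | n < N ∧ n ∈ C} ∪ T := by
        rintro n ⟨hn, hmem⟩
        rw [nth_univ] at hmem
        rcases hM hmem with h | h
        · exact Or.inl ⟨hn, h⟩
        · exact Or.inr h
      have hfin : ({n : ℕ | n < N ∧ n ∈ C} ∪ T).Finite :=
        (Set.finite_Iio N |>.subset (fun n hn => hn.1)).union hT
      calc ({n : ℕ | n < N ∧ Nat.nth (· ∈ (Set.univ : Set ℕ)) n ∈ M}).ncard
          ≤ ({n : ℕ | n < N ∧ n ∈ C} ∪ T).ncard := Set.ncard_le_ncard he hfin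
        _ ≤ {n : ℕ | n < N ∧ n ∈ C}.ncard + T.ncard := Set.ncard_union_le _ _
        _ ≤ Nat.sqrt N + 1 + T.ncard := by
            exact Nat.add_le_add_right (sq_count_le N) _
    have hup : Filter.Tendsto (fun N : ℕ => ((Nat.sqrt N : ℝ) + 1 + T.ncard) / N)
        Filter.atTop (nhds 0) := by
      have h2 := tendsto_const_div_atTop_nhds_zero_nat (((1 + T.ncard : ℕ)) : ℝ)
      have := tendsto_sqrt_div.add h2
      simp only [add_zero] at this
      refine this.congr fun N => ?_
      push_cast
      ring
    refine tendsto_of_tendsto_of_tendsto_of_le_of_le' tendsto_const_nhds hup ?_ ?_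
    · filter_upwards with N; positivity
    · filter_upwards [Filter.eventually_gt_atTop 0] with N hN
      have hNpos : (0:ℝ) < N := by exact_mod_cast hN
      have hb : ((({n : ℕ | n < N ∧ Nat.nth (· ∈ (Set.univ : Set ℕ)) n ∈ M}).ncard : ℝ))
          ≤ (Nat.sqrt N : ℝ) + 1 + T.ncard := by exact_mod_cast hbound N
      gcongr
  exact key.limsup_eq


noncomputable section

variable (f : List ℕ → ℕ)

/-- The least natural number missing from the list `l`. -/
def minMiss (l : List ℕ) : ℕ := sInf {m : ℕ | m ∉ l}

lemma minMiss_not_mem (l : List ℕ) : minMiss l ∉ l := by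
  have hne : {m : ℕ | m ∉ l}.Nonempty := by
    obtain ⟨a, ha⟩ := l.finite_toSet.exists_notMem
    exact ⟨a, ha⟩
  exact Nat.sInf_mem hne

lemma mem_of_lt_minMiss {l : List ℕ} {k : ℕ} (h : k < minMiss l) : k ∈ l := by
  by_contra hk
  exact (Nat.notMem_of_lt_sInf h) hk

/-- The key one-round extension: append the least missing element, then (by validity,
simulating a continuation that enumerates `C ∪ (current elements)`, which is a member
of the collection) extend further to a point where the algorithm's guess is contained
in `C ∪ (current elements)`. -/
lemma step_exists (hf : GuaranteesValidity L f) (l : List ℕ) (hl : l.Nodup) :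
    ∃ l' : List ℕ, (l ++ [minMiss l]) <+: l' ∧ l'.Nodup ∧
      L (f l') ⊆ C ∪ {x | x ∈ l'} := by
  classical
  set m := minMiss l with hm
  set l1 := l ++ [m] with hl1def
  have hml : m ∉ l := minMiss_not_mem l
  have hl1 : l1.Nodup := by
    simp [hl1def, List.nodup_append, hl, hml]
    exact fun a ha h => hml (h ▸ ha)
  set S : Finset ℕ := l1.toFinset with hS
  set p : ℕ → Prop := fun n => n ∈ C ∧ n ∉ S with hp
  have hpinf : (setOf p).Infinite := by
    have : setOf p = C \ ↑S := by
      ext x; exact Iff.rfl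
    rw [this]
    exact C_infinite.diff S.finite_toSet
  set E' : ℕ → ℕ := fun n =>
    if h : n < l1.length then l1[n] else Nat.nth p (n - l1.length) with hE'
  have hE'lt : ∀ n (h : n < l1.length), E' n = l1[n] := fun n h => dif_pos h
  have hE'ge : ∀ n, ¬ n < l1.length → E' n = Nat.nth p (n - l1.length) :=
    fun n h => dif_neg h
  have hE'memS : ∀ n, n < l1.length → E' n ∈ S := by
    intro n h
    rw [hE'lt n h]
    exact List.mem_toFinset.2 (l1.getElem_mem h)
  have hE'p : ∀ n, ¬ n < l1.length → p (E' n) := by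
    intro n h
    rw [hE'ge n h]
    exact Nat.nth_mem_of_infinite hpinf _
  have hinj : Function.Injective E' := by
    intro a b hab
    by_cases ha : a < l1.length <;> by_cases hb : b < l1.length
    · rw [hE'lt a ha, hE'lt b hb] at hab
      exact (List.Nodup.getElem_inj_iff hl1).mp hab
    · exact absurd (hab ▸ hE'memS a ha) (hE'p b hb).2
    · exact absurd (hab ▸ hE'p a ha).2 (not_not.2 (hE'memS b hb))
    · rw [hE'ge a ha, hE'ge b hb] at hab
      have := Nat.nth_injective hpinf hab
      omega
  have hrange : Set.range E' = C ∪ ↑S := by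
    ext x
    constructor
    · rintro ⟨n, rfl⟩
      by_cases h : n < l1.length
      · exact Or.inr (hE'memS n h)
      · exact Or.inl (hE'p n h).1
    · intro hx
      have hcase : x ∈ (↑S : Set ℕ) ∨ p x := by
        rcases hx with hx | hx
        · by_cases hxs : x ∈ S
          · exact Or.inl hxs
          · exact Or.inr ⟨hx, hxs⟩
        · exact Or.inl hx
      rcases hcase with hx' | hx'
      · obtain ⟨i, hi, hie⟩ := List.getElem_of_mem (List.mem_toFinset.1 hx')
        exact ⟨i, by rw [hE'lt i hi]; exact hie⟩
      · have : x ∈ Set.range (Nat.nth p) := by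
          rw [Nat.range_nth_of_infinite hpinf]; exact hx'
        obtain ⟨k, hk⟩ := this
        refine ⟨l1.length + k, ?_⟩
        rw [hE'ge _ (by omega)]
        simpa using hk
  set i : ℕ := @Encodable.encode (Finset ℕ) Denumerable.toEncodable S + 1 with hi
  have hLi : L i = C ∪ ↑S := by
    simp [hi, L, Denumerable.ofNat_encode]
  obtain ⟨t0, ht0⟩ := hf i E' ⟨hinj, by rw [hLi]; exact hrange⟩
  set t1 := max t0 l1.length with ht1
  have hlen : l1.length ≤ t1 + 1 := le_trans (le_max_right _ _) (Nat.le_succ _)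
  refine ⟨epref E' t1, ?_, ?_, ?_⟩
  · have h1 : (epref E' t1).take l1.length = l1 := by
      unfold epref
      rw [← List.map_take, List.take_range, min_eq_left hlen]
      apply List.ext_getElem (by simp)
      intro n h1n h2n
      simp only [List.getElem_map, List.getElem_range]
      exact hE'lt n h2n
    exact h1 ▸ List.take_prefix _ _
  · exact List.nodup_range.map hinj
  · intro x hx
    have hsub := ht0 t1 (le_max_left _ _) hx
    rw [hLi] at hsub
    rcases hsub with h | h
    · exact Or.inl h
    · refine Or.inr ?_
      have hx1 : x ∈ l1 := List.mem_toFinset.1 h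
      have h1 : (epref E' t1).take l1.length = l1 := by
        unfold epref
        rw [← List.map_take, List.take_range, min_eq_left hlen]
        apply List.ext_getElem (by simp)
        intro n h1n h2n
        simp only [List.getElem_map, List.getElem_range]
        exact hE'lt n h2n
      exact (h1 ▸ List.take_prefix l1.length (epref E' t1)).subset hx1

variable (hf : GuaranteesValidity L f)

/-- The adversary's sequence of growing prefixes. -/
def ls : ℕ → List ℕ
  | 0 => []
  | (r+1) => if h : (ls r).Nodup then Classical.choose (step_exists f hf (ls r) h) else []

lemma ls_nodup : ∀ r, (ls f hf r).Nodup := by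
  intro r
  induction r with
  | zero => exact List.nodup_nil
  | succ r ih =>
      show (if h : (ls f hf r).Nodup then _ else []).Nodup
      rw [dif_pos ih]
      exact (Classical.choose_spec (step_exists f hf (ls f hf r) ih)).2.1

lemma ls_step (r : ℕ) :
    ((ls f hf r) ++ [minMiss (ls f hf r)]) <+: ls f hf (r+1) ∧
      L (f (ls f hf (r+1))) ⊆ C ∪ {x | x ∈ ls f hf (r+1)} := by
  have ih := ls_nodup f hf r
  have : ls f hf (r+1) = Classical.choose (step_exists f hf (ls f hf r) ih) := by
    show (if h : (ls f hf r).Nodup then _ else []) = _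
    rw [dif_pos ih]
  rw [this]
  obtain ⟨h1, _, h3⟩ := Classical.choose_spec (step_exists f hf (ls f hf r) ih)
  exact ⟨h1, h3⟩

lemma ls_prefix_succ (r : ℕ) : ls f hf r <+: ls f hf (r+1) :=
  (List.prefix_append _ _).trans (ls_step f hf r).1

lemma ls_prefix {r r' : ℕ} (h : r ≤ r') : ls f hf r <+: ls f hf r' := by
  induction r', h using Nat.le_induction with
  | base => exact List.prefix_rfl
  | succ n hn ih => exact ih.trans (ls_prefix_succ f hf n)

lemma ls_len_succ (r : ℕ) : (ls f hf r).length + 1 ≤ (ls f hf (r+1)).length := by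
  have := (ls_step f hf r).1.length_le
  simpa using this

lemma ls_len (r : ℕ) : r ≤ (ls f hf r).length := by
  induction r with
  | zero => simp
  | succ r ih => exact le_trans (by omega) (ls_len_succ f hf r)

lemma minMiss_strict (r : ℕ) : minMiss (ls f hf r) < minMiss (ls f hf (r+1)) := by
  set m := minMiss (ls f hf r) with hm
  by_contra hcon
  push_neg at hcon
  have hmem : minMiss (ls f hf (r+1)) ∈ ls f hf (r+1) := by
    rcases lt_or_eq_of_le hcon with h | h
    · have : minMiss (ls f hf (r+1)) ∈ ls f hf r := mem_of_lt_minMiss h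
      exact (ls_prefix_succ f hf r).subset this
    · rw [h]
      exact (ls_step f hf r).1.subset (by simp [hm])
  exact minMiss_not_mem _ hmem

lemma minMiss_ge (r : ℕ) : r ≤ minMiss (ls f hf r) :=
  StrictMono.le_apply (strictMono_nat_of_lt_succ (minMiss_strict f hf))

lemma mem_ls (n : ℕ) : n ∈ ls f hf (n+1) :=
  mem_of_lt_minMiss (lt_of_lt_of_le (Nat.lt_succ_self n) (minMiss_ge f hf (n+1)))

/-- The adversary's enumeration. -/
def E : ℕ → ℕ := fun n => (ls f hf (n+1)).getD n 0

lemma E_eq {r n : ℕ} (h : n < (ls f hf r).length) : E f hf n = (ls f hf r)[n] := by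
  have hn1 : n < (ls f hf (n+1)).length := lt_of_lt_of_le (Nat.lt_succ_self n) (ls_len f hf (n+1))
  set r' := max r (n+1) with hr'
  have h1 : (ls f hf r')[n]'(lt_of_lt_of_le h (ls_prefix f hf (le_max_left r (n+1))).length_le)
      = (ls f hf r)[n] := ((ls_prefix f hf (le_max_left r (n+1))).getElem h).symm
  have h2 : (ls f hf r')[n]'(lt_of_lt_of_le hn1 (ls_prefix f hf (le_max_right r (n+1))).length_le)
      = (ls f hf (n+1))[n] := ((ls_prefix f hf (le_max_right r (n+1))).getElem hn1).symm
  show (ls f hf (n+1)).getD n 0 = _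
  rw [List.getD_eq_getElem _ _ hn1, ← h2, h1]

lemma E_inj : Function.Injective (E f hf) := by
  intro a b hab
  set r := max a b + 1 with hr
  have ha : a < (ls f hf r).length := lt_of_lt_of_le (by omega) (ls_len f hf r)
  have hb : b < (ls f hf r).length := lt_of_lt_of_le (by omega) (ls_len f hf r)
  rw [E_eq f hf ha, E_eq f hf hb] at hab
  exact (List.Nodup.getElem_inj_iff (ls_nodup f hf r)).mp hab

lemma E_range : Set.range (E f hf) = Set.univ := by
  rw [Set.eq_univ_iff_forall]
  intro x
  obtain ⟨i, hi, hie⟩ := List.getElem_of_mem (mem_ls f hf x)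
  exact ⟨i, by rw [E_eq f hf hi]; exact hie⟩

lemma epref_E (r : ℕ) : epref (E f hf) ((ls f hf (r+1)).length - 1) = ls f hf (r+1) := by
  have hlen : r + 1 ≤ (ls f hf (r+1)).length := ls_len f hf (r+1)
  have hlen1 : ((ls f hf (r+1)).length - 1) + 1 = (ls f hf (r+1)).length := by omega
  apply List.ext_getElem
  · simp [epref, hlen1]
  · intro n h1n h2n
    have hn : n < (ls f hf (r+1)).length := h2n
    simp only [epref, List.getElem_map, List.getElem_range]
    exact E_eq f hf hn

end

end Stmt4Aux

theorem stmt4 :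
    ∃ (L : ℕ → Set ℕ) (z : ℕ), (∀ i, (L i).Infinite) ∧
      ∀ f : List ℕ → ℕ, GuaranteesValidity L f →
        ∃ E : ℕ → ℕ, IsEnum E (L z) ∧
          Filter.liminf (fun t : ℕ => upperDensity (L (f (epref E t))) (L z))
            Filter.atTop = 0 := by
  refine ⟨Stmt4Aux.L, 0, Stmt4Aux.L_infinite, ?_⟩
  intro f hf
  have hL0 : Stmt4Aux.L 0 = Set.univ := rfl
  refine ⟨Stmt4Aux.E f hf, ⟨Stmt4Aux.E_inj f hf, by rw [hL0]; exact Stmt4Aux.E_range f hf⟩, ?_⟩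
  set d : ℕ → ℝ := fun t => upperDensity (Stmt4Aux.L (f (epref (Stmt4Aux.E f hf) t)))
    (Stmt4Aux.L 0) with hd
  have hd01 : ∀ t, 0 ≤ d t ∧ d t ≤ 1 := fun t =>
    ⟨Stmt4Aux.upperDensity_nonneg _ _, Stmt4Aux.upperDensity_le_one _ _⟩
  have hfreq : ∀ N : ℕ, ∃ t ≥ N, d t = 0 := by
    intro N
    refine ⟨(Stmt4Aux.ls f hf (N+1)).length - 1, ?_, ?_⟩
    · have := Stmt4Aux.ls_len f hf (N+1); omega
    · show upperDensity _ _ = 0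
      rw [Stmt4Aux.epref_E f hf N, hL0]
      exact Stmt4Aux.density_zero (List.finite_toSet _) (Stmt4Aux.ls_step f hf N).2
  apply le_antisymm
  · refine Filter.liminf_le_of_frequently_le ?_ ?_
    · rw [Filter.frequently_atTop]
      intro N
      obtain ⟨t, ht, hdt⟩ := hfreq N
      exact ⟨t, ht, le_of_eq hdt⟩
    · refine Filter.isBoundedUnder_of ⟨0, fun t => ?_⟩
      exact (hd01 t).1
  · refine Filter.le_liminf_of_le ?_ ?_
    · exact (Filter.isBoundedUnder_of ⟨1, fun t => (hd01 t).2⟩).isCoboundedUnder_ge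
    · exact Filter.Eventually.of_forall fun t => (hd01 t).1
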